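/- Let 1 - arcsinh(1) < a < 1 + arcsinh(1) be real (arcsinh(1) = Real.arsinh 1) and define r_a := a - (1 - arcsinh(1)) if a ≤ 1 and r_a := 1 + arcsinh(1) - a if a ≥ 1. Then the open disk {w ∈ ℂ : |w - a| < r_a} is contained in Ω_ρ = ρ '' 𝔻. -/

import Mathlib

open Complex

/-- Principal branch of the complex inverse hyperbolic sine. -/
noncomputable def carcsinh (z : ℂ) : ℂ := Complex.log (z + (1 + z ^ 2) ^ ((1 : ℂ) / 2))

/-- The function `ρ(z) = 1 + arcsinh z`. -/
noncomputable def ρ (z : ℂ) : ℂ := 1 + carcsinh z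

/-- The open unit disk in `ℂ`. -/
def unitDisk : Set ℂ := {z : ℂ | ‖z‖ < 1}

/-- The petal-shaped domain `Ω_ρ = ρ '' 𝔻`. -/
noncomputable def OmegaRho : Set ℂ := ρ '' unitDisk

lemma arsinh_one_pos : 0 < Real.arsinh 1 := by
  rw [← Real.arsinh_zero]
  exact Real.arsinh_lt_arsinh.2 one_pos

lemma arsinh_one_lt_one : Real.arsinh 1 < 1 := by
  have h : (1:ℝ) < Real.sinh 1 := Real.self_lt_sinh_iff.2 one_pos
  calc Real.arsinh 1 < Real.arsinh (Real.sinh 1) := Real.arsinh_lt_arsinh.2 h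
    _ = 1 := Real.arsinh_sinh 1

lemma convexOn_sinh : ConvexOn ℝ (Set.Ici (0:ℝ)) Real.sinh := by
  apply convexOn_of_deriv2_nonneg (convex_Ici 0) Real.continuous_sinh.continuousOn
  · exact Real.differentiable_sinh.differentiableOn
  · rw [Real.deriv_sinh]; exact Real.differentiable_cosh.differentiableOn
  · intro x hx
    simp only [Function.iterate_succ, Function.iterate_zero, Function.comp_apply, id_eq,
      Real.deriv_sinh, Real.deriv_cosh]
    have : (0:ℝ) ≤ x := le_of_lt (by simpa using hx)
    exact Real.sinh_nonneg_iff.2 this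

/-- For `0 ≤ x ≤ arsinh 1`, `sinh x ≤ x / arsinh 1`. -/
lemma sinh_le_div {x : ℝ} (hx : 0 ≤ x) (hxs : x ≤ Real.arsinh 1) :
    Real.sinh x ≤ x / Real.arsinh 1 := by
  set s := Real.arsinh 1 with hs
  have hs0 : 0 < s := arsinh_one_pos
  have ht0 : 0 ≤ x / s := div_nonneg hx hs0.le
  have ht1 : x / s ≤ 1 := (div_le_one hs0).2 hxs
  have := convexOn_sinh.2 (Set.mem_Ici.2 hs0.le) (Set.mem_Ici.2 le_rfl)
    ht0 (by linarith : (0:ℝ) ≤ 1 - x / s) (by ring)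
  simp only [smul_eq_mul, mul_zero, add_zero, Real.sinh_zero, mul_one] at this
  rw [div_mul_cancel₀ _ hs0.ne'] at this
  calc Real.sinh x ≤ x / s * Real.sinh s := this
    _ = x / s := by rw [hs, Real.sinh_arsinh, mul_one]

lemma sinh_decomp (z : ℂ) :
    Complex.sinh z = (Real.sinh z.re * Real.cos z.im : ℝ) +
      (Real.cosh z.re * Real.sin z.im : ℝ) * I := by
  conv_lhs => rw [← Complex.re_add_im z]
  rw [Complex.sinh_add, Complex.sinh_mul_I, Complex.cosh_mul_I]
  push_cast
  ring

lemma cosh_decomp (z : ℂ) :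
    Complex.cosh z = (Real.cosh z.re * Real.cos z.im : ℝ) +
      (Real.sinh z.re * Real.sin z.im : ℝ) * I := by
  conv_lhs => rw [← Complex.re_add_im z]
  rw [Complex.cosh_add, Complex.sinh_mul_I, Complex.cosh_mul_I]
  push_cast
  ring

/-- Key bound: if `|ζ| < arsinh 1` then `|sinh ζ| < 1`. -/
lemma abs_sinh_lt {z : ℂ} (h : ‖z‖ < Real.arsinh 1) :
    ‖Complex.sinh z‖ < 1 := by
  set s := Real.arsinh 1 with hs
  have hs0 : 0 < s := arsinh_one_pos
  have hs1 : s < 1 := arsinh_one_lt_one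
  set x := z.re
  set y := z.im
  have hx : |x| ≤ ‖z‖ := Complex.abs_re_le_norm z
  have hy : |y| ≤ ‖z‖ := Complex.abs_im_le_norm z
  have habs : ‖z‖ ^ 2 = x ^ 2 + y ^ 2 := by
    rw [Complex.sq_norm, Complex.normSq_apply]; ring
  -- square of the modulus of sinh z
  have hsq : ‖Complex.sinh z‖ ^ 2 = Real.sinh x ^ 2 + Real.sin y ^ 2 := by
    rw [Complex.sq_norm, sinh_decomp z, Complex.normSq_apply]
    simp only [Complex.add_re, Complex.ofReal_re, Complex.mul_re, Complex.I_re, Complex.I_im,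
      Complex.ofReal_im, Complex.add_im, Complex.mul_im]
    have hc : Real.cosh x ^ 2 = Real.sinh x ^ 2 + 1 := Real.cosh_sq x
    have hcs : Real.sin y ^ 2 + Real.cos y ^ 2 = 1 := Real.sin_sq_add_cos_sq y
    nlinarith [hc, hcs]
  -- bound sinh x
  have hb1 : Real.sinh x ^ 2 ≤ x ^ 2 / s ^ 2 := by
    have h1 : Real.sinh |x| ≤ |x| / s := sinh_le_div (abs_nonneg x) (hx.trans h.le)
    have h4 : (0:ℝ) ≤ Real.sinh |x| := Real.sinh_nonneg_iff.2 (abs_nonneg x)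
    have h6 : Real.sinh x ^ 2 = Real.sinh |x| ^ 2 := by rw [← Real.abs_sinh, _root_.sq_abs]
    rw [h6]
    calc Real.sinh |x| ^ 2 ≤ (|x| / s) ^ 2 := pow_le_pow_left₀ h4 h1 2
      _ = x ^ 2 / s ^ 2 := by rw [div_pow, _root_.sq_abs]
  -- bound sin y
  have hb2 : Real.sin y ^ 2 ≤ y ^ 2 / s ^ 2 := by
    have h1 : |Real.sin y| ≤ |y| := Real.abs_sin_le_abs
    have h2 : Real.sin y ^ 2 ≤ y ^ 2 := by
      calc Real.sin y ^ 2 = |Real.sin y| ^ 2 := (_root_.sq_abs _).symm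
        _ ≤ |y| ^ 2 := pow_le_pow_left₀ (abs_nonneg _) h1 2
        _ = y ^ 2 := _root_.sq_abs y
    have hsle : s ^ 2 ≤ 1 := by nlinarith
    calc Real.sin y ^ 2 ≤ y ^ 2 := h2
      _ ≤ y ^ 2 / s ^ 2 := by
          rw [le_div_iff₀ (by positivity)]
          nlinarith [sq_nonneg y]
  have hlt : ‖Complex.sinh z‖ ^ 2 < 1 := by
    rw [hsq]
    have : x ^ 2 + y ^ 2 < s ^ 2 := by
      rw [← habs]
      exact pow_lt_pow_left₀ h (norm_nonneg z) (by norm_num)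
    have hd : x ^ 2 / s ^ 2 + y ^ 2 / s ^ 2 < 1 := by
      rw [← add_div, div_lt_one (by positivity)]
      exact this
    linarith
  nlinarith [norm_nonneg (Complex.sinh z)]

/-- Principal square root of the square of a complex number with positive real part. -/
lemma cpow_half_sq {w : ℂ} (hw : 0 < w.re) : (w ^ 2) ^ ((1:ℂ)/2) = w := by
  have hw0 : w ≠ 0 := by
    intro h; rw [h] at hw; simp at hw
  have hz0 : w ^ 2 ≠ 0 := pow_ne_zero 2 hw0
  set u := (w ^ 2) ^ ((1:ℂ)/2) with hu
  have husq : u ^ 2 = w ^ 2 := by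
    rw [hu, sq, ← Complex.cpow_add _ _ hz0]
    norm_num
  have hure : 0 ≤ u.re := by
    rw [hu, Complex.cpow_def_of_ne_zero hz0, Complex.exp_re]
    have him : (Complex.log (w ^ 2) * ((1:ℂ)/2)).im = Complex.arg (w ^ 2) / 2 := by
      simp [Complex.mul_im, Complex.log_im]
      ring
    rw [him]
    have harg : |Complex.arg (w ^ 2)| ≤ Real.pi := Complex.abs_arg_le_pi _
    have habs := abs_le.1 harg
    have : (0:ℝ) ≤ Real.cos (Complex.arg (w ^ 2) / 2) := by
      apply Real.cos_nonneg_of_mem_Icc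
      constructor
      · linarith [habs.1]
      · linarith [habs.2]
    positivity
  have hfac : (u - w) * (u + w) = 0 := by
    have : (u - w) * (u + w) = u ^ 2 - w ^ 2 := by ring
    rw [this, husq, sub_self]
  rcases mul_eq_zero.1 hfac with hcase | hcase
  · exact sub_eq_zero.1 hcase
  · exfalso
    have huw : u = -w := by
      have := eq_neg_of_add_eq_zero_left hcase
      linear_combination this
    rw [huw] at hure
    simp only [Complex.neg_re] at hure
    linarith

/-- `carcsinh (sinh ζ) = ζ` when `|ζ| < arsinh 1`. -/
lemma carcsinh_sinh {z : ℂ} (h : ‖z‖ < Real.arsinh 1) :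
    carcsinh (Complex.sinh z) = z := by
  have hs1 : Real.arsinh 1 < 1 := arsinh_one_lt_one
  have hy : |z.im| < 1 := lt_of_le_of_lt (Complex.abs_im_le_norm z) (h.trans hs1)
  have hypi : |z.im| < Real.pi / 2 := hy.trans_le (by linarith [Real.pi_gt_three])
  have hyy := abs_lt.1 hypi
  -- real part of cosh z is positive
  have hre : 0 < (Complex.cosh z).re := by
    rw [cosh_decomp z]
    simp only [Complex.add_re, Complex.ofReal_re, Complex.mul_re, Complex.I_re, Complex.I_im,
      Complex.ofReal_im]
    have h1 : 0 < Real.cos z.im := Real.cos_pos_of_mem_Ioo ⟨hyy.1, hyy.2⟩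
    have h2 : 0 < Real.cosh z.re := Real.cosh_pos _
    have : Real.cosh z.re * Real.cos z.im > 0 := mul_pos h2 h1
    nlinarith
  have hsqrt : (1 + Complex.sinh z ^ 2) ^ ((1:ℂ)/2) = Complex.cosh z := by
    have : 1 + Complex.sinh z ^ 2 = Complex.cosh z ^ 2 := by
      rw [Complex.cosh_sq]; ring
    rw [this]
    exact cpow_half_sq hre
  rw [carcsinh, hsqrt, Complex.sinh_add_cosh]
  exact Complex.log_exp (by linarith [Real.pi_gt_three]) (by linarith [Real.pi_gt_three])

/-- For `1 - arcsinh 1 < a < 1 + arcsinh 1`, the open disk centered at `a` of radius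
`r_a` (with `r_a = a - (1 - arcsinh 1)` if `a ≤ 1`, and `r_a = 1 + arcsinh 1 - a`
if `a ≥ 1`) is contained in `Ω_ρ`. -/
theorem disk_subset_OmegaRho (a : ℝ)
    (h1 : 1 - Real.arsinh 1 < a) (h2 : a < 1 + Real.arsinh 1) :
    {w : ℂ | ‖w - (a : ℂ)‖ <
      (if a ≤ 1 then a - (1 - Real.arsinh 1) else 1 + Real.arsinh 1 - a)} ⊆ OmegaRho := by
  intro w hw
  simp only [Set.mem_setOf_eq] at hw
  -- first, |w - 1| < arsinh 1
  have hd : ‖w - 1‖ < Real.arsinh 1 := by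
    have htri : ‖w - 1‖ ≤ ‖w - (a:ℂ)‖ + ‖(a:ℂ) - 1‖ := by
      calc ‖w - 1‖ = ‖(w - (a:ℂ)) + ((a:ℂ) - 1)‖ := by ring_nf
        _ ≤ _ := norm_add_le _ _
    have habs : ‖(a:ℂ) - 1‖ = |a - 1| := by
      rw [← Complex.ofReal_one, ← Complex.ofReal_sub, Complex.norm_real, Real.norm_eq_abs]
    by_cases hc : a ≤ 1
    · rw [if_pos hc] at hw
      have : |a - 1| = 1 - a := by rw [abs_of_nonpos (by linarith)]; ring
      rw [habs, this] at htri
      linarith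
    · rw [if_neg hc] at hw
      push_neg at hc
      have : |a - 1| = a - 1 := abs_of_nonneg (by linarith)
      rw [habs, this] at htri
      linarith
  refine ⟨Complex.sinh (w - 1), abs_sinh_lt hd, ?_⟩
  rw [ρ, carcsinh_sinh hd]
  ring
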